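/- Let a, b, p, q, k be positive reals with k·p < 1 and k·q > 1, and set m_p = (1 − kp)/(q − p) and m_q = (kq − 1)/(q − p). Then ∫₀^{∞} (a·z^p + b·z^q)^{−k} dz = (Γ(m_p)·Γ(m_q))/(a^k·Γ(k)·(q − p)) · (a/b)^{m_p}, where Γ is the real Gamma function Γ(z) = ∫₀^{∞} e^{−t} t^{z−1} dt. -/

import Mathlib

open MeasureTheory

open Real Set

lemma beta01 {s t : ℝ} (hs : 0 < s) (ht : 0 < t) :
    (∫ x in Ioo (0:ℝ) 1, x ^ (s-1) * (1-x) ^ (t-1)) =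
      Real.Gamma s * Real.Gamma t / Real.Gamma (s+t) := by
  have key := Complex.Gamma_mul_Gamma_eq_betaIntegral (s := (s:ℂ)) (t := (t:ℂ))
    (by simpa using hs) (by simpa using ht)
  have hconv : Complex.betaIntegral (s:ℂ) (t:ℂ) =
      ((∫ x in (0:ℝ)..1, x ^ (s-1) * (1-x) ^ (t-1) : ℝ) : ℂ) := by
    rw [Complex.betaIntegral, ← intervalIntegral.integral_ofReal]
    apply intervalIntegral.integral_congr
    intro x hx
    rw [Set.uIcc_of_le zero_le_one] at hx
    push_cast
    rw [Complex.ofReal_cpow hx.1 (s-1), Complex.ofReal_cpow (by linarith [hx.2]) (t-1)]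
    push_cast
    ring
  have h2 : (∫ x in (0:ℝ)..1, x ^ (s-1) * (1-x) ^ (t-1)) =
      ∫ x in Ioo (0:ℝ) 1, x ^ (s-1) * (1-x) ^ (t-1) := by
    rw [intervalIntegral.integral_of_le zero_le_one, integral_Ioc_eq_integral_Ioo]
  rw [hconv, ← Complex.ofReal_add, Complex.Gamma_ofReal, Complex.Gamma_ofReal,
    Complex.Gamma_ofReal, ← Complex.ofReal_mul, ← Complex.ofReal_mul,
    Complex.ofReal_inj] at key
  have hΓ : Real.Gamma (s+t) ≠ 0 := (Real.Gamma_pos_of_pos (by linarith)).ne'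
  rw [← h2]
  field_simp
  linarith [key]

lemma betaIoi {s t : ℝ} (hs : 0 < s) (ht : 0 < t) :
    (∫ u in Ioi (0:ℝ), u ^ (s-1) * (1+u) ^ (-(s+t))) =
      Real.Gamma s * Real.Gamma t / Real.Gamma (s+t) := by
  rw [← beta01 hs ht]
  have himg : (fun x : ℝ => x / (1-x)) '' Ioo 0 1 = Ioi 0 := by
    ext u
    constructor
    · rintro ⟨x, ⟨hx0, hx1⟩, rfl⟩
      exact div_pos hx0 (by linarith)
    · intro hu
      have hu' : 0 < u := hu
      refine ⟨u / (1+u), ⟨div_pos hu' (by linarith), ?_⟩, ?_⟩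
      · rw [div_lt_one (by linarith)]; linarith
      · have h1u : (1:ℝ) + u ≠ 0 := by linarith
        field_simp
        ring
  have hderiv : ∀ x ∈ Ioo (0:ℝ) 1, HasDerivWithinAt (fun x : ℝ => x / (1-x))
      (((1-x)^2)⁻¹) (Ioo 0 1) x := by
    intro x hx
    have h1x : (1:ℝ) - x ≠ 0 := by simp only [mem_Ioo] at hx; intro h; linarith [hx.2]
    have h := (hasDerivAt_id x).div ((hasDerivAt_id x).const_sub 1) h1x
    apply HasDerivAt.hasDerivWithinAt
    convert h using 1
    · rfl
    · rfl
    · simp only [id]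
      ring
  have hinj : InjOn (fun x : ℝ => x / (1-x)) (Ioo 0 1) := by
    intro x hx y hy h
    simp only [mem_Ioo] at hx hy
    have h1x : (1:ℝ) - x ≠ 0 := by intro h'; linarith [hx.2]
    have h1y : (1:ℝ) - y ≠ 0 := by intro h'; linarith [hy.2]
    field_simp at h
    nlinarith
  rw [← himg, integral_image_eq_integral_abs_deriv_smul measurableSet_Ioo hderiv hinj]
  apply setIntegral_congr_fun measurableSet_Ioo
  intro x hx
  simp only [mem_Ioo] at hx
  have h1x : (0:ℝ) < 1 - x := by linarith [hx.2]
  have key : 1 + x / (1-x) = (1-x)⁻¹ := by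
    have : (1:ℝ) - x ≠ 0 := h1x.ne'
    field_simp
    ring
  simp only [smul_eq_mul, key]
  have e1 : (x/(1-x)) ^ (s-1) = x ^ (s-1) * ((1-x) ^ (s-1))⁻¹ := by
    rw [Real.div_rpow hx.1.le h1x.le, div_eq_mul_inv]
  have e2 : ((1-x)⁻¹) ^ (-(s+t)) = (1-x) ^ (s+t) := by
    rw [Real.inv_rpow h1x.le, Real.rpow_neg h1x.le, inv_inv]
  have e3 : |((1-x)^2)⁻¹| = ((1-x) ^ ((2:ℕ):ℝ))⁻¹ := by
    rw [abs_of_pos (by positivity), Real.rpow_natCast]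
  have e4 : (1-x) ^ (s+t) = (1-x) ^ (t-1) * (1-x) ^ ((2:ℕ):ℝ) * (1-x) ^ (s-1) := by
    rw [← Real.rpow_add h1x, ← Real.rpow_add h1x]
    congr 1
    push_cast
    ring
  have n1 : (1-x) ^ (s-1) ≠ 0 := by positivity
  have n2 : (1-x) ^ ((2:ℕ):ℝ) ≠ 0 := by positivity
  rw [e1, e2, e3, e4]
  field_simp

/-- For a, b, p, q, k > 0 with kp < 1 < kq, with m_p = (1−kp)/(q−p) and
m_q = (kq−1)/(q−p), ∫₀^∞ (a z^p + b z^q)^{−k} dz = Γ(m_p)Γ(m_q)/(a^k Γ(k)(q−p))·(a/b)^{m_p}. -/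
theorem stmt6 (a b p q k : ℝ) (ha : 0 < a) (hb : 0 < b) (hp : 0 < p) (hq : 0 < q)
    (hk : 0 < k) (hkp : k * p < 1) (hkq : 1 < k * q) :
    (∫ z in Set.Ioi (0:ℝ), (a * z ^ p + b * z ^ q) ^ (-k)) =
      Real.Gamma ((1 - k * p) / (q - p)) * Real.Gamma ((k * q - 1) / (q - p)) /
        (a ^ k * Real.Gamma k * (q - p)) * (a / b) ^ ((1 - k * p) / (q - p)) := by
  have hpq : p < q := by
    have h1 : p < 1 / k := by rw [lt_div_iff₀ hk]; linarith [mul_comm k p]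
    have h2 : 1 / k < q := by rw [div_lt_iff₀ hk]; linarith [mul_comm k q]
    linarith
  have hqp : 0 < q - p := by linarith
  set r : ℝ := 1 / (q - p) with hr_def
  have hr : 0 < r := by positivity
  set c : ℝ := a / b with hc_def
  have hc : 0 < c := by positivity
  set m : ℝ := (1 - k * p) / (q - p) with hm_def
  set m' : ℝ := (k * q - 1) / (q - p) with hm'_def
  have hm : 0 < m := by apply div_pos; linarith; exact hqp
  have hm' : 0 < m' := by apply div_pos; linarith; exact hqp
  have hmm' : m + m' = k := by
    rw [hm_def, hm'_def, ← add_div]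
    rw [div_eq_iff hqp.ne']
    ring
  -- the substitution function
  set f : ℝ → ℝ := fun x => (c * x) ^ r with hf_def
  have himg : f '' Set.Ioi 0 = Set.Ioi 0 := by
    ext u
    constructor
    · rintro ⟨x, hx, rfl⟩
      have hx' : (0:ℝ) < x := Set.mem_Ioi.mp hx
      exact Set.mem_Ioi.mpr (Real.rpow_pos_of_pos (by positivity) r)
    · intro hu
      have hu' : (0:ℝ) < u := hu
      refine ⟨u ^ (q - p) / c, Set.mem_Ioi.mpr (by positivity), ?_⟩
      have : c * (u ^ (q - p) / c) = u ^ (q - p) := by field_simp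
      simp only [hf_def, this, ← Real.rpow_natCast]
      rw [← Real.rpow_mul hu'.le]
      rw [show (q - p) * r = 1 by rw [hr_def]; field_simp]
      exact Real.rpow_one u
  have hderiv : ∀ x ∈ Set.Ioi (0:ℝ), HasDerivWithinAt f
      (r * (c * x) ^ (r - 1) * c) (Set.Ioi 0) x := by
    intro x hx
    have hx' : (0:ℝ) < x := hx
    have hcx : c * x ≠ 0 := by positivity
    have h1 : HasDerivAt (fun y : ℝ => y ^ r) (r * (c * x) ^ (r - 1)) (c * x) := by
      have := Real.hasDerivAt_rpow_const (x := c * x) (p := r) (Or.inl hcx)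
      simpa [mul_comm] using this
    have h2 : HasDerivAt (fun y : ℝ => c * y) c x := by
      simpa using (hasDerivAt_id x).const_mul c
    exact (h1.comp x h2).hasDerivWithinAt
  have hinj : Set.InjOn f (Set.Ioi 0) := by
    have hmono : StrictMonoOn f (Set.Ioi 0) := by
      intro x hx y hy hxy
      have hx' : (0:ℝ) < x := Set.mem_Ioi.mp hx
      exact Real.rpow_lt_rpow (by positivity) (mul_lt_mul_of_pos_left hxy hc) hr
    exact hmono.injOn
  have hpt : ∀ x ∈ Set.Ioi (0:ℝ),
      |r * (c * x) ^ (r - 1) * c| • ((a * (f x) ^ p + b * (f x) ^ q) ^ (-k)) =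
        (r * (a ^ (-k) * c ^ m)) * (x ^ (m - 1) * (1 + x) ^ (-(m + m'))) := by
    intro x hx
    have hx' : (0:ℝ) < x := hx
    have hcx : (0:ℝ) < c * x := by positivity
    have hw : (0:ℝ) < f x := Real.rpow_pos_of_pos hcx r
    have hwqp : (f x) ^ (q - p) = c * x := by
      rw [hf_def, ← Real.rpow_mul hcx.le]
      rw [show r * (q - p) = 1 by rw [hr_def]; field_simp]
      exact Real.rpow_one _
    have key1 : a * (f x) ^ p + b * (f x) ^ q = a * ((f x) ^ p * (1 + x)) := by
      have : (f x) ^ q = (f x) ^ p * (f x) ^ (q - p) := by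
        rw [← Real.rpow_add hw]; ring_nf
      rw [this, hwqp, hc_def]
      field_simp
    have key2 : (a * ((f x) ^ p * (1 + x))) ^ (-k) =
        a ^ (-k) * ((f x) ^ p) ^ (-k) * (1 + x) ^ (-k) := by
      rw [Real.mul_rpow ha.le (by positivity), Real.mul_rpow (by positivity) (by positivity)]
      ring
    have key3 : ((f x) ^ p) ^ (-k) = (c * x) ^ (r * p * (-k)) := by
      rw [hf_def, ← Real.rpow_mul hcx.le, ← Real.rpow_mul hcx.le]
    have habs : |r * (c * x) ^ (r - 1) * c| = r * (c * x) ^ (r - 1) * c := by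
      apply abs_of_pos; positivity
    rw [smul_eq_mul, key1, key2, key3, habs]
    have key4 : (c * x) ^ (r - 1) * (c * x) ^ (r * p * (-k)) = (c * x) ^ (m - 1) := by
      rw [← Real.rpow_add hcx]
      congr 1
      rw [hm_def, hr_def]; field_simp; ring
    have key5 : (c * x) ^ (m - 1) = c ^ (m - 1) * x ^ (m - 1) :=
      Real.mul_rpow hc.le hx'.le
    have key6 : c * c ^ (m - 1) = c ^ m := by
      nth_rewrite 1 [← Real.rpow_one c]
      rw [← Real.rpow_add hc]; ring_nf
    rw [hmm']
    calc r * (c * x) ^ (r - 1) * c * (a ^ (-k) * ((c * x) ^ (r * p * (-k))) * (1 + x) ^ (-k))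
        = r * a ^ (-k) * c * ((c * x) ^ (r - 1) * (c * x) ^ (r * p * (-k))) * (1 + x) ^ (-k) := by
          ring
      _ = r * a ^ (-k) * c * (c ^ (m - 1) * x ^ (m - 1)) * (1 + x) ^ (-k) := by
          rw [key4, key5]
      _ = r * a ^ (-k) * (c * c ^ (m - 1)) * x ^ (m - 1) * (1 + x) ^ (-k) := by ring
      _ = _ := by rw [key6]; ring
  have main : (∫ z in Set.Ioi (0:ℝ), (a * z ^ p + b * z ^ q) ^ (-k)) =
      (r * (a ^ (-k) * c ^ m)) * ∫ x in Set.Ioi (0:ℝ), x ^ (m - 1) * (1 + x) ^ (-(m + m')) := by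
    have step1 : (∫ z in Set.Ioi (0:ℝ), (a * z ^ p + b * z ^ q) ^ (-k)) =
        ∫ x in Set.Ioi (0:ℝ),
          |r * (c * x) ^ (r - 1) * c| • ((a * (f x) ^ p + b * (f x) ^ q) ^ (-k)) := by
      conv_lhs => rw [← himg]
      exact integral_image_eq_integral_abs_deriv_smul measurableSet_Ioi hderiv hinj _
    rw [step1, setIntegral_congr_fun measurableSet_Ioi hpt, integral_const_mul]
  rw [main, betaIoi hm hm', hmm']
  have hΓ : Real.Gamma k ≠ 0 := (Real.Gamma_pos_of_pos hk).ne'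
  have hak : (0:ℝ) < a ^ k := Real.rpow_pos_of_pos ha k
  rw [Real.rpow_neg ha.le, hr_def]
  field_simp
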